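/- Let r ∈ ℕ ∪ {∞}, σ > 0, and ω : ℝ → ℝ a function of class C^r with ω(0) = 0. For (b,d) ∈ ℝ², let g_{b,d}(x,y) := (1/(2πσ²)) exp(−((x−b)² + (y−(d−b))²)/(2σ²)). Let R₁,…,R_s be measurable subsets of ℝ² (for instance the n² congruent subsquares of a fixed square B ⊂ ℝ²). Then for every m ∈ ℕ, the map ℝ^{2m} → ℝ^s sending (b₁,d₁,…,b_m,d_m) to the vector whose t-th component is Σ_{i=1}^{m} ω(dᵢ − bᵢ) ∫_{R_t} g_{bᵢ,dᵢ}(x,y) dx dy (Lebesgue integral on ℝ²) is of class C^r on all of ℝ^{2m}. -/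

import Mathlib

open MeasureTheory
open Real

namespace PersistAux

/-- 1D polynomial-weighted gaussian. -/
noncomputable def psi (σ : ℝ) (a : ℕ) (t : ℝ) : ℝ := t ^ a * Real.exp (-t ^ 2 / (2 * σ ^ 2))

lemma continuous_psi (σ : ℝ) (a : ℕ) : Continuous (psi σ a) := by
  unfold psi; fun_prop

lemma hasDerivAt_psi {σ : ℝ} (hσ : 0 < σ) (a : ℕ) (t : ℝ) :
    HasDerivAt (psi σ a) ((a : ℝ) * psi σ (a - 1) t - σ⁻¹ ^ 2 * psi σ (a + 1) t) t := by
  have h1 : HasDerivAt (fun t : ℝ => t ^ a) ((a : ℝ) * t ^ (a - 1)) t := hasDerivAt_pow a t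
  have h2 : HasDerivAt (fun t : ℝ => -t ^ 2 / (2 * σ ^ 2)) (-(2 * t) / (2 * σ ^ 2)) t := by
    have := ((hasDerivAt_pow 2 t).neg).div_const (2 * σ ^ 2)
    simpa using this
  have h3 := h2.exp
  have h : HasDerivAt (fun t => t ^ a * Real.exp (-t ^ 2 / (2 * σ ^ 2))) _ t := h1.mul h3
  have hσ' : σ ≠ 0 := ne_of_gt hσ
  convert h using 1
  · funext x; rfl
  simp only [psi, pow_succ]
  field_simp
  ring

/-- Polynomial times gaussian is dominated by a wider gaussian. -/
lemma pow_le_factorial_mul_exp {x : ℝ} (hx : 0 ≤ x) (a : ℕ) :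
    x ^ a ≤ (a.factorial : ℝ) * Real.exp x := by
  have h1 : x ^ a / (a.factorial : ℝ) ≤ Real.exp x := by
    calc x ^ a / (a.factorial : ℝ)
        ≤ ∑ i ∈ Finset.range (a + 1), x ^ i / (i.factorial : ℝ) := by
          exact Finset.single_le_sum (f := fun i => x ^ i / (i.factorial : ℝ))
            (fun i _ => by positivity) (Finset.self_mem_range_succ a)
      _ ≤ Real.exp x := Real.sum_le_exp_of_nonneg hx _
  have hfac : (0:ℝ) < (a.factorial : ℝ) := by exact_mod_cast a.factorial_pos
  calc x ^ a = x ^ a / (a.factorial : ℝ) * (a.factorial : ℝ) := by field_simp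
    _ ≤ Real.exp x * (a.factorial : ℝ) := by gcongr
    _ = (a.factorial : ℝ) * Real.exp x := mul_comm _ _

/-- Polynomial times gaussian is dominated by a wider gaussian. -/
lemma psi_bound {σ : ℝ} (hσ : 0 < σ) (a : ℕ) :
    ∃ C : ℝ, 0 ≤ C ∧ ∀ t : ℝ, |psi σ a t| ≤ C * Real.exp (-t ^ 2 / (4 * σ ^ 2)) := by
  refine ⟨1 + (a.factorial : ℝ) * (4 * σ ^ 2) ^ a, by positivity, fun t => ?_⟩
  have h4 : (0:ℝ) < 4 * σ ^ 2 := by positivity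
  have habs : |psi σ a t| = |t| ^ a * Real.exp (-t ^ 2 / (2 * σ ^ 2)) := by
    rw [psi, abs_mul, abs_pow, abs_of_pos (Real.exp_pos _)]
  rw [habs]
  have hsplit : Real.exp (-t ^ 2 / (2 * σ ^ 2))
      = Real.exp (-t ^ 2 / (4 * σ ^ 2)) * Real.exp (-t ^ 2 / (4 * σ ^ 2)) := by
    rw [← Real.exp_add]
    congr 1
    field_simp
    ring
  have hkey : |t| ^ a * Real.exp (-t ^ 2 / (4 * σ ^ 2))
      ≤ 1 + (a.factorial : ℝ) * (4 * σ ^ 2) ^ a := by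
    rcases le_or_gt |t| 1 with h | h
    · have h1 : |t| ^ a ≤ 1 := pow_le_one₀ (abs_nonneg t) h
      have h2 : Real.exp (-t ^ 2 / (4 * σ ^ 2)) ≤ 1 := by
        apply Real.exp_le_one_iff.2
        apply div_nonpos_of_nonpos_of_nonneg (by nlinarith [sq_nonneg t]) (by positivity)
      nlinarith [mul_nonneg (pow_nonneg (abs_nonneg t) a) (Real.exp_pos (-t ^ 2 / (4 * σ ^ 2))).le,
        pow_nonneg (mul_nonneg (by norm_num : (0:ℝ) ≤ 4) (sq_nonneg σ)) a,
        (Nat.one_le_cast.2 a.factorial_pos : (1:ℝ) ≤ (a.factorial : ℝ)), Real.exp_pos (-t ^ 2 / (4 * σ ^ 2)),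
        pow_pos h4 a]
    · have h1 : |t| ^ a ≤ (t ^ 2) ^ a := by
        rw [← sq_abs]
        exact pow_le_pow_left₀ (abs_nonneg t) (by nlinarith) a
      have h2 : (t ^ 2) ^ a ≤ (4 * σ ^ 2) ^ a * ((a.factorial : ℝ) * Real.exp (t ^ 2 / (4 * σ ^ 2))) := by
        have hx : (0:ℝ) ≤ t ^ 2 / (4 * σ ^ 2) := by positivity
        have := pow_le_factorial_mul_exp hx a
        calc (t ^ 2) ^ a = (4 * σ ^ 2) ^ a * (t ^ 2 / (4 * σ ^ 2)) ^ a := by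
              rw [← mul_pow]; congr 1; field_simp
          _ ≤ (4 * σ ^ 2) ^ a * ((a.factorial : ℝ) * Real.exp (t ^ 2 / (4 * σ ^ 2))) := by
              gcongr
      have h3 : Real.exp (t ^ 2 / (4 * σ ^ 2)) * Real.exp (-t ^ 2 / (4 * σ ^ 2)) = 1 := by
        rw [← Real.exp_add]; simp [neg_div]
      have hE := (Real.exp_pos (-t ^ 2 / (4 * σ ^ 2))).le
      calc |t| ^ a * Real.exp (-t ^ 2 / (4 * σ ^ 2))
          ≤ (4 * σ ^ 2) ^ a * ((a.factorial : ℝ) * Real.exp (t ^ 2 / (4 * σ ^ 2)))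
              * Real.exp (-t ^ 2 / (4 * σ ^ 2)) := by gcongr; exact h1.trans h2
        _ = (a.factorial : ℝ) * (4 * σ ^ 2) ^ a
              * (Real.exp (t ^ 2 / (4 * σ ^ 2)) * Real.exp (-t ^ 2 / (4 * σ ^ 2))) := by ring
        _ = (a.factorial : ℝ) * (4 * σ ^ 2) ^ a := by rw [h3, mul_one]
        _ ≤ 1 + (a.factorial : ℝ) * (4 * σ ^ 2) ^ a := by linarith
  calc |t| ^ a * Real.exp (-t ^ 2 / (2 * σ ^ 2))
      = |t| ^ a * Real.exp (-t ^ 2 / (4 * σ ^ 2)) * Real.exp (-t ^ 2 / (4 * σ ^ 2)) := by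
        rw [hsplit]; ring
    _ ≤ (1 + (a.factorial : ℝ) * (4 * σ ^ 2) ^ a) * Real.exp (-t ^ 2 / (4 * σ ^ 2)) := by
        gcongr

/-- Uniform bound for translated `psi` when the translation lies in a unit ball. -/
lemma psi_translate_bound {σ : ℝ} (hσ : 0 < σ) (a : ℕ) :
    ∃ C : ℝ, 0 ≤ C ∧ ∀ s u t : ℝ, |u - s| ≤ 1 →
      |psi σ a (t - u)| ≤ C * Real.exp (-(t - s) ^ 2 / (8 * σ ^ 2)) := by
  obtain ⟨C, hC0, hC⟩ := psi_bound hσ a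
  refine ⟨C * Real.exp (1 / (4 * σ ^ 2)), by positivity, fun s u t hd => ?_⟩
  have h1 : |psi σ a (t - u)| ≤ C * Real.exp (-(t - u) ^ 2 / (4 * σ ^ 2)) := hC _
  have h2 : Real.exp (-(t - u) ^ 2 / (4 * σ ^ 2))
      ≤ Real.exp (1 / (4 * σ ^ 2)) * Real.exp (-(t - s) ^ 2 / (8 * σ ^ 2)) := by
    rw [← Real.exp_add]
    apply Real.exp_le_exp.2
    rw [div_add_div _ _ (by positivity) (by positivity)]
    rw [div_le_div_iff₀ (by positivity) (by positivity)]
    have habs := abs_le.1 hd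
    have hd2 : (u - s) ^ 2 ≤ 1 := by nlinarith [habs.1, habs.2]
    have hkey : (t - s) ^ 2 / 2 - 1 ≤ (t - u) ^ 2 := by
      nlinarith [sq_nonneg ((t - s) - 2 * (u - s))]
    nlinarith [mul_le_mul_of_nonneg_left hkey (by positivity : (0:ℝ) ≤ 32 * σ ^ 2 * σ ^ 2)]
  calc |psi σ a (t - u)| ≤ C * Real.exp (-(t - u) ^ 2 / (4 * σ ^ 2)) := h1
    _ ≤ C * (Real.exp (1 / (4 * σ ^ 2)) * Real.exp (-(t - s) ^ 2 / (8 * σ ^ 2))) := by gcongr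
    _ = C * Real.exp (1 / (4 * σ ^ 2)) * Real.exp (-(t - s) ^ 2 / (8 * σ ^ 2)) := by ring

/-- Translated 1D gaussians are integrable. -/
lemma integrable_gauss1 {c : ℝ} (hc : 0 < c) (s : ℝ) :
    Integrable (fun x : ℝ => Real.exp (-(x - s) ^ 2 / c)) := by
  have h1 : Integrable (fun x : ℝ => Real.exp (-(1 / c) * x ^ 2)) :=
    integrable_exp_neg_mul_sq (by positivity)
  have h2 : (fun x : ℝ => Real.exp (-(x - s) ^ 2 / c))
      = (fun x : ℝ => Real.exp (-(1 / c) * x ^ 2)) ∘ (fun x : ℝ => x - s) := by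
    funext x
    simp only [Function.comp_apply]
    congr 1
    field_simp
  rw [h2]
  exact ((measurePreserving_sub_right volume s).integrable_comp
    h1.aestronglyMeasurable).2 h1

/-- Products of translated gaussians are integrable on the plane. -/
lemma integrable_gauss2 {c : ℝ} (hc : 0 < c) (p : ℝ × ℝ) :
    Integrable (fun q : ℝ × ℝ =>
      Real.exp (-(q.1 - p.1) ^ 2 / c) * Real.exp (-(q.2 - p.2) ^ 2 / c)) := by
  rw [MeasureTheory.Measure.volume_eq_prod]
  exact (integrable_gauss1 hc p.1).mul_prod (integrable_gauss1 hc p.2)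

/-- The parametric set integral of a translated 2D polynomial gaussian. -/
noncomputable def Fint (σ : ℝ) (R : Set (ℝ × ℝ)) (a b : ℕ) (p : ℝ × ℝ) : ℝ :=
  ∫ q in R, psi σ a (q.1 - p.1) * psi σ b (q.2 - p.2)

lemma integrand_integrable {σ : ℝ} (hσ : 0 < σ) (a b : ℕ) (p : ℝ × ℝ) :
    Integrable (fun q : ℝ × ℝ => psi σ a (q.1 - p.1) * psi σ b (q.2 - p.2)) := by
  obtain ⟨Ca, hCa0, hCa⟩ := psi_bound hσ a
  obtain ⟨Cb, hCb0, hCb⟩ := psi_bound hσ b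
  have h4 : (0:ℝ) < 4 * σ ^ 2 := by positivity
  refine Integrable.mono' (((integrable_gauss2 h4 p).const_mul (Ca * Cb)))
    ?_ (Filter.Eventually.of_forall fun q => ?_)
  · exact (((continuous_psi σ a).comp (continuous_fst.sub continuous_const)).mul
      ((continuous_psi σ b).comp (continuous_snd.sub continuous_const))).aestronglyMeasurable
  · have := mul_le_mul (hCa (q.1 - p.1)) (hCb (q.2 - p.2)) (abs_nonneg _)
      (by positivity)
    calc ‖psi σ a (q.1 - p.1) * psi σ b (q.2 - p.2)‖
        = |psi σ a (q.1 - p.1)| * |psi σ b (q.2 - p.2)| := abs_mul _ _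
      _ ≤ Ca * Real.exp (-(q.1 - p.1) ^ 2 / (4 * σ ^ 2)) *
            (Cb * Real.exp (-(q.2 - p.2) ^ 2 / (4 * σ ^ 2))) := this
      _ = Ca * Cb * (Real.exp (-(q.1 - p.1) ^ 2 / (4 * σ ^ 2)) *
            Real.exp (-(q.2 - p.2) ^ 2 / (4 * σ ^ 2))) := by ring

lemma hasFDerivAt_Fint {σ : ℝ} (hσ : 0 < σ) (R : Set (ℝ × ℝ)) (a b : ℕ) (p₀ : ℝ × ℝ) :
    HasFDerivAt (Fint σ R a b)
      ((σ⁻¹ ^ 2 * Fint σ R (a + 1) b p₀ - (a : ℝ) * Fint σ R (a - 1) b p₀) •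
          ContinuousLinearMap.fst ℝ ℝ ℝ
        + (σ⁻¹ ^ 2 * Fint σ R a (b + 1) p₀ - (b : ℝ) * Fint σ R a (b - 1) p₀) •
          ContinuousLinearMap.snd ℝ ℝ ℝ) p₀ := by
  classical
  set μ : Measure (ℝ × ℝ) := (volume : Measure (ℝ × ℝ)).restrict R with hμ
  -- the integrand family and its derivative
  set F : (ℝ × ℝ) → (ℝ × ℝ) → ℝ :=
    fun x q => psi σ a (q.1 - x.1) * psi σ b (q.2 - x.2) with hF
  set F' : (ℝ × ℝ) → (ℝ × ℝ) → (ℝ × ℝ) →L[ℝ] ℝ := fun x q =>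
    (σ⁻¹ ^ 2 * (psi σ (a + 1) (q.1 - x.1) * psi σ b (q.2 - x.2)) -
        (a : ℝ) * (psi σ (a - 1) (q.1 - x.1) * psi σ b (q.2 - x.2))) •
          ContinuousLinearMap.fst ℝ ℝ ℝ
      + (σ⁻¹ ^ 2 * (psi σ a (q.1 - x.1) * psi σ (b + 1) (q.2 - x.2)) -
        (b : ℝ) * (psi σ a (q.1 - x.1) * psi σ (b - 1) (q.2 - x.2))) •
          ContinuousLinearMap.snd ℝ ℝ ℝ with hF'
  -- pointwise differentiability
  have h_diff : ∀ (q : ℝ × ℝ) (x : ℝ × ℝ), HasFDerivAt (fun y => F y q) (F' x q) x := by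
    intro q x
    have hA : HasDerivAt (fun u : ℝ => psi σ a (q.1 - u))
        (σ⁻¹ ^ 2 * psi σ (a + 1) (q.1 - x.1) - (a : ℝ) * psi σ (a - 1) (q.1 - x.1)) x.1 := by
      have h1 := (hasDerivAt_psi hσ a (q.1 - x.1)).comp x.1
        (((hasDerivAt_id x.1).const_sub q.1))
      have h2 : HasDerivAt (fun u : ℝ => psi σ a (q.1 - u))
          (((a : ℝ) * psi σ (a - 1) (q.1 - x.1) - σ⁻¹ ^ 2 * psi σ (a + 1) (q.1 - x.1)) * -1)
          x.1 := h1
      convert h2 using 1; ring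
    have hB : HasDerivAt (fun u : ℝ => psi σ b (q.2 - u))
        (σ⁻¹ ^ 2 * psi σ (b + 1) (q.2 - x.2) - (b : ℝ) * psi σ (b - 1) (q.2 - x.2)) x.2 := by
      have h1 := (hasDerivAt_psi hσ b (q.2 - x.2)).comp x.2
        (((hasDerivAt_id x.2).const_sub q.2))
      have h2 : HasDerivAt (fun u : ℝ => psi σ b (q.2 - u))
          (((b : ℝ) * psi σ (b - 1) (q.2 - x.2) - σ⁻¹ ^ 2 * psi σ (b + 1) (q.2 - x.2)) * -1)
          x.2 := h1
      convert h2 using 1; ring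
    have hA2 : HasFDerivAt (fun y : ℝ × ℝ => psi σ a (q.1 - y.1))
        ((σ⁻¹ ^ 2 * psi σ (a + 1) (q.1 - x.1) - (a : ℝ) * psi σ (a - 1) (q.1 - x.1)) •
          ContinuousLinearMap.fst ℝ ℝ ℝ) x :=
      hA.comp_hasFDerivAt x (hasFDerivAt_fst)
    have hB2 : HasFDerivAt (fun y : ℝ × ℝ => psi σ b (q.2 - y.2))
        ((σ⁻¹ ^ 2 * psi σ (b + 1) (q.2 - x.2) - (b : ℝ) * psi σ (b - 1) (q.2 - x.2)) •
          ContinuousLinearMap.snd ℝ ℝ ℝ) x :=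
      hB.comp_hasFDerivAt x (hasFDerivAt_snd)
    have hmul := hA2.mul hB2
    have : F' x q = psi σ a (q.1 - x.1) •
          ((σ⁻¹ ^ 2 * psi σ (b + 1) (q.2 - x.2) - (b : ℝ) * psi σ (b - 1) (q.2 - x.2)) •
            ContinuousLinearMap.snd ℝ ℝ ℝ)
        + psi σ b (q.2 - x.2) •
          ((σ⁻¹ ^ 2 * psi σ (a + 1) (q.1 - x.1) - (a : ℝ) * psi σ (a - 1) (q.1 - x.1)) •
            ContinuousLinearMap.fst ℝ ℝ ℝ) := by
      apply ContinuousLinearMap.ext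
      intro v
      simp only [hF', ContinuousLinearMap.add_apply, ContinuousLinearMap.smul_apply,
        ContinuousLinearMap.coe_fst', ContinuousLinearMap.coe_snd', smul_eq_mul]
      ring
    rw [this]
    exact hmul
  -- constants for the uniform bounds
  obtain ⟨Dap, hDap0, hDap⟩ := psi_translate_bound hσ (a + 1)
  obtain ⟨Dam, hDam0, hDam⟩ := psi_translate_bound hσ (a - 1)
  obtain ⟨Da, hDa0, hDa⟩ := psi_translate_bound hσ a
  obtain ⟨Dbp, hDbp0, hDbp⟩ := psi_translate_bound hσ (b + 1)
  obtain ⟨Dbm, hDbm0, hDbm⟩ := psi_translate_bound hσ (b - 1)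
  obtain ⟨Db, hDb0, hDb⟩ := psi_translate_bound hσ b
  set M : ℝ := (σ⁻¹ ^ 2 * Dap + (a : ℝ) * Dam) * Db + (σ⁻¹ ^ 2 * Dbp + (b : ℝ) * Dbm) * Da
    with hM
  set bound : ℝ × ℝ → ℝ := fun q =>
    M * (Real.exp (-(q.1 - p₀.1) ^ 2 / (8 * σ ^ 2)) *
         Real.exp (-(q.2 - p₀.2) ^ 2 / (8 * σ ^ 2))) with hbound
  have h8 : (0:ℝ) < 8 * σ ^ 2 := by positivity
  have hnorm_fst : ‖ContinuousLinearMap.fst ℝ ℝ ℝ‖ ≤ 1 :=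
    ContinuousLinearMap.opNorm_le_bound _ zero_le_one fun v => by
      simpa using norm_fst_le v
  have hnorm_snd : ‖ContinuousLinearMap.snd ℝ ℝ ℝ‖ ≤ 1 :=
    ContinuousLinearMap.opNorm_le_bound _ zero_le_one fun v => by
      simpa using norm_snd_le v
  have tri : ∀ x y : ℝ, |x - y| ≤ |x| + |y| := fun x y => by
    rw [sub_eq_add_neg]
    simpa using abs_add_le x (-y)
  have h_bound : ∀ᵐ q ∂μ, ∀ x ∈ Metric.ball p₀ 1, ‖F' x q‖ ≤ bound q := by
    refine Filter.Eventually.of_forall fun q x hx => ?_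
    have hx' : ‖x - p₀‖ < 1 := by rwa [mem_ball_iff_norm] at hx
    have hx1 : |x.1 - p₀.1| ≤ 1 := by
      have : ‖(x - p₀).1‖ ≤ ‖x - p₀‖ := norm_fst_le _
      simpa [Real.norm_eq_abs] using this.trans hx'.le
    have hx2 : |x.2 - p₀.2| ≤ 1 := by
      have : ‖(x - p₀).2‖ ≤ ‖x - p₀‖ := norm_snd_le _
      simpa [Real.norm_eq_abs] using this.trans hx'.le
    set G1 : ℝ := Real.exp (-(q.1 - p₀.1) ^ 2 / (8 * σ ^ 2)) with hG1
    set G2 : ℝ := Real.exp (-(q.2 - p₀.2) ^ 2 / (8 * σ ^ 2)) with hG2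
    have hG1p : 0 < G1 := Real.exp_pos _
    have hG2p : 0 < G2 := Real.exp_pos _
    have eap : |psi σ (a + 1) (q.1 - x.1)| ≤ Dap * G1 := hDap p₀.1 x.1 q.1 hx1
    have eam : |psi σ (a - 1) (q.1 - x.1)| ≤ Dam * G1 := hDam p₀.1 x.1 q.1 hx1
    have ea : |psi σ a (q.1 - x.1)| ≤ Da * G1 := hDa p₀.1 x.1 q.1 hx1
    have ebp : |psi σ (b + 1) (q.2 - x.2)| ≤ Dbp * G2 := hDbp p₀.2 x.2 q.2 hx2
    have ebm : |psi σ (b - 1) (q.2 - x.2)| ≤ Dbm * G2 := hDbm p₀.2 x.2 q.2 hx2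
    have eb : |psi σ b (q.2 - x.2)| ≤ Db * G2 := hDb p₀.2 x.2 q.2 hx2
    have hc1 : |σ⁻¹ ^ 2 * (psi σ (a + 1) (q.1 - x.1) * psi σ b (q.2 - x.2)) -
        (a : ℝ) * (psi σ (a - 1) (q.1 - x.1) * psi σ b (q.2 - x.2))|
        ≤ (σ⁻¹ ^ 2 * Dap + (a : ℝ) * Dam) * Db * (G1 * G2) := by
      have t1 : |σ⁻¹ ^ 2 * (psi σ (a + 1) (q.1 - x.1) * psi σ b (q.2 - x.2))|
          ≤ σ⁻¹ ^ 2 * ((Dap * G1) * (Db * G2)) := by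
        rw [abs_mul, abs_mul, abs_of_nonneg (by positivity : (0:ℝ) ≤ σ⁻¹ ^ 2)]
        gcongr <;> first | exact abs_nonneg _ | exact eap | exact eb
      have t2 : |(a : ℝ) * (psi σ (a - 1) (q.1 - x.1) * psi σ b (q.2 - x.2))|
          ≤ (a : ℝ) * ((Dam * G1) * (Db * G2)) := by
        rw [abs_mul, abs_mul, abs_of_nonneg (by positivity : (0:ℝ) ≤ (a:ℝ))]
        gcongr <;> first | exact abs_nonneg _ | exact eam | exact eb
      calc |σ⁻¹ ^ 2 * (psi σ (a + 1) (q.1 - x.1) * psi σ b (q.2 - x.2)) -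
            (a : ℝ) * (psi σ (a - 1) (q.1 - x.1) * psi σ b (q.2 - x.2))|
          ≤ |σ⁻¹ ^ 2 * (psi σ (a + 1) (q.1 - x.1) * psi σ b (q.2 - x.2))| +
            |(a : ℝ) * (psi σ (a - 1) (q.1 - x.1) * psi σ b (q.2 - x.2))| := tri _ _
        _ ≤ σ⁻¹ ^ 2 * ((Dap * G1) * (Db * G2)) + (a : ℝ) * ((Dam * G1) * (Db * G2)) := by
            linarith
        _ = (σ⁻¹ ^ 2 * Dap + (a : ℝ) * Dam) * Db * (G1 * G2) := by ring
    have hc2 : |σ⁻¹ ^ 2 * (psi σ a (q.1 - x.1) * psi σ (b + 1) (q.2 - x.2)) -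
        (b : ℝ) * (psi σ a (q.1 - x.1) * psi σ (b - 1) (q.2 - x.2))|
        ≤ (σ⁻¹ ^ 2 * Dbp + (b : ℝ) * Dbm) * Da * (G1 * G2) := by
      have t1 : |σ⁻¹ ^ 2 * (psi σ a (q.1 - x.1) * psi σ (b + 1) (q.2 - x.2))|
          ≤ σ⁻¹ ^ 2 * ((Da * G1) * (Dbp * G2)) := by
        rw [abs_mul, abs_mul, abs_of_nonneg (by positivity : (0:ℝ) ≤ σ⁻¹ ^ 2)]
        gcongr <;> first | exact abs_nonneg _ | exact ea | exact ebp
      have t2 : |(b : ℝ) * (psi σ a (q.1 - x.1) * psi σ (b - 1) (q.2 - x.2))|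
          ≤ (b : ℝ) * ((Da * G1) * (Dbm * G2)) := by
        rw [abs_mul, abs_mul, abs_of_nonneg (by positivity : (0:ℝ) ≤ (b:ℝ))]
        gcongr <;> first | exact abs_nonneg _ | exact ea | exact ebm
      calc |σ⁻¹ ^ 2 * (psi σ a (q.1 - x.1) * psi σ (b + 1) (q.2 - x.2)) -
            (b : ℝ) * (psi σ a (q.1 - x.1) * psi σ (b - 1) (q.2 - x.2))|
          ≤ |σ⁻¹ ^ 2 * (psi σ a (q.1 - x.1) * psi σ (b + 1) (q.2 - x.2))| +
            |(b : ℝ) * (psi σ a (q.1 - x.1) * psi σ (b - 1) (q.2 - x.2))| := tri _ _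
        _ ≤ σ⁻¹ ^ 2 * ((Da * G1) * (Dbp * G2)) + (b : ℝ) * ((Da * G1) * (Dbm * G2)) := by
            linarith
        _ = (σ⁻¹ ^ 2 * Dbp + (b : ℝ) * Dbm) * Da * (G1 * G2) := by ring
    calc ‖F' x q‖
        ≤ ‖(σ⁻¹ ^ 2 * (psi σ (a + 1) (q.1 - x.1) * psi σ b (q.2 - x.2)) -
            (a : ℝ) * (psi σ (a - 1) (q.1 - x.1) * psi σ b (q.2 - x.2))) •
              ContinuousLinearMap.fst ℝ ℝ ℝ‖ +
          ‖(σ⁻¹ ^ 2 * (psi σ a (q.1 - x.1) * psi σ (b + 1) (q.2 - x.2)) -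
            (b : ℝ) * (psi σ a (q.1 - x.1) * psi σ (b - 1) (q.2 - x.2))) •
              ContinuousLinearMap.snd ℝ ℝ ℝ‖ := norm_add_le _ _
      _ ≤ |σ⁻¹ ^ 2 * (psi σ (a + 1) (q.1 - x.1) * psi σ b (q.2 - x.2)) -
            (a : ℝ) * (psi σ (a - 1) (q.1 - x.1) * psi σ b (q.2 - x.2))| +
          |σ⁻¹ ^ 2 * (psi σ a (q.1 - x.1) * psi σ (b + 1) (q.2 - x.2)) -
            (b : ℝ) * (psi σ a (q.1 - x.1) * psi σ (b - 1) (q.2 - x.2))| := by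
          have hn1 : ∀ c : ℝ, ‖c • ContinuousLinearMap.fst ℝ ℝ ℝ‖ ≤ |c| := fun c =>
            ContinuousLinearMap.opNorm_le_bound _ (abs_nonneg c) fun v => by
              simp only [ContinuousLinearMap.smul_apply, ContinuousLinearMap.coe_fst',
                smul_eq_mul, Real.norm_eq_abs, abs_mul]
              exact mul_le_mul_of_nonneg_left
                (by simpa [Real.norm_eq_abs] using norm_fst_le v) (abs_nonneg c)
          have hn2 : ∀ c : ℝ, ‖c • ContinuousLinearMap.snd ℝ ℝ ℝ‖ ≤ |c| := fun c =>
            ContinuousLinearMap.opNorm_le_bound _ (abs_nonneg c) fun v => by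
              simp only [ContinuousLinearMap.smul_apply, ContinuousLinearMap.coe_snd',
                smul_eq_mul, Real.norm_eq_abs, abs_mul]
              exact mul_le_mul_of_nonneg_left
                (by simpa [Real.norm_eq_abs] using norm_snd_le v) (abs_nonneg c)
          exact add_le_add (hn1 _) (hn2 _)
      _ ≤ bound q := by
          rw [hbound, hM]
          have := add_le_add hc1 hc2
          calc _ ≤ (σ⁻¹ ^ 2 * Dap + (a : ℝ) * Dam) * Db * (G1 * G2) +
              (σ⁻¹ ^ 2 * Dbp + (b : ℝ) * Dbm) * Da * (G1 * G2) := this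
            _ = _ := by ring
  have bound_int : Integrable bound μ :=
    ((integrable_gauss2 h8 p₀).const_mul M).restrict
  have hF_meas : ∀ᶠ x in nhds p₀, AEStronglyMeasurable (F x) μ :=
    Filter.Eventually.of_forall fun x => (integrand_integrable hσ a b x).aestronglyMeasurable.restrict
  have hF_int : Integrable (F p₀) μ := (integrand_integrable hσ a b p₀).restrict
  have hcψ1 : ∀ (c : ℕ) (z : ℝ), Continuous fun q : ℝ × ℝ => psi σ c (q.1 - z) :=
    fun c z => (continuous_psi σ c).comp (continuous_fst.sub continuous_const)
  have hcψ2 : ∀ (c : ℕ) (z : ℝ), Continuous fun q : ℝ × ℝ => psi σ c (q.2 - z) :=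
    fun c z => (continuous_psi σ c).comp (continuous_snd.sub continuous_const)
  have hF'_meas : AEStronglyMeasurable (F' p₀) μ := by
    apply Continuous.aestronglyMeasurable
    apply Continuous.add
    · exact (((continuous_const.mul ((hcψ1 (a+1) p₀.1).mul (hcψ2 b p₀.2))).sub
        (continuous_const.mul ((hcψ1 (a-1) p₀.1).mul (hcψ2 b p₀.2)))).smul continuous_const)
    · exact (((continuous_const.mul ((hcψ1 a p₀.1).mul (hcψ2 (b+1) p₀.2))).sub
        (continuous_const.mul ((hcψ1 a p₀.1).mul (hcψ2 (b-1) p₀.2)))).smul continuous_const)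
  have key := hasFDerivAt_integral_of_dominated_of_fderiv_le
    (𝕜 := ℝ) (μ := μ) (F := F) (F' := F') (x₀ := p₀) (bound := bound)
    (Metric.ball_mem_nhds p₀ zero_lt_one) hF_meas hF_int hF'_meas h_bound bound_int
    (Filter.Eventually.of_forall fun q x _ => h_diff q x)
  have heq : (∫ q, F' p₀ q ∂μ) =
      (σ⁻¹ ^ 2 * Fint σ R (a + 1) b p₀ - (a : ℝ) * Fint σ R (a - 1) b p₀) •
          ContinuousLinearMap.fst ℝ ℝ ℝ
        + (σ⁻¹ ^ 2 * Fint σ R a (b + 1) p₀ - (b : ℝ) * Fint σ R a (b - 1) p₀) •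
          ContinuousLinearMap.snd ℝ ℝ ℝ := by
    have i1 : Integrable (fun q : ℝ × ℝ =>
        σ⁻¹ ^ 2 * (psi σ (a + 1) (q.1 - p₀.1) * psi σ b (q.2 - p₀.2)) -
        (a : ℝ) * (psi σ (a - 1) (q.1 - p₀.1) * psi σ b (q.2 - p₀.2))) μ :=
      ((integrand_integrable hσ (a+1) b p₀).restrict.const_mul _).sub
        ((integrand_integrable hσ (a-1) b p₀).restrict.const_mul _)
    have i2 : Integrable (fun q : ℝ × ℝ =>
        σ⁻¹ ^ 2 * (psi σ a (q.1 - p₀.1) * psi σ (b + 1) (q.2 - p₀.2)) -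
        (b : ℝ) * (psi σ a (q.1 - p₀.1) * psi σ (b - 1) (q.2 - p₀.2))) μ :=
      ((integrand_integrable hσ a (b+1) p₀).restrict.const_mul _).sub
        ((integrand_integrable hσ a (b-1) p₀).restrict.const_mul _)
    rw [hF']
    rw [integral_add (i1.smul_const _) (i2.smul_const _),
      integral_smul_const, integral_smul_const]
    congr 2
    · rw [integral_sub ((integrand_integrable hσ (a+1) b p₀).restrict.const_mul _)
        ((integrand_integrable hσ (a-1) b p₀).restrict.const_mul _),
        integral_const_mul, integral_const_mul]
      rfl
    · rw [integral_sub ((integrand_integrable hσ a (b+1) p₀).restrict.const_mul _)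
        ((integrand_integrable hσ a (b-1) p₀).restrict.const_mul _),
        integral_const_mul, integral_const_mul]
      rfl
  rw [← heq]
  exact key


lemma contDiff_Fint_nat {σ : ℝ} (hσ : 0 < σ) (R : Set (ℝ × ℝ)) :
    ∀ (n : ℕ) (a b : ℕ), ContDiff ℝ (n : ℕ) (Fint σ R a b) := by
  intro n
  induction n with
  | zero =>
    intro a b
    rw [Nat.cast_zero, contDiff_zero]
    exact continuous_iff_continuousAt.2 fun p =>
      (hasFDerivAt_Fint hσ R a b p).differentiableAt.continuousAt
  | succ n ih =>
    intro a b
    have hcast : ((n + 1 : ℕ) : WithTop ℕ∞) = (n : ℕ) + 1 := by norm_cast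
    rw [hcast, contDiff_succ_iff_fderiv]
    refine ⟨fun p => (hasFDerivAt_Fint hσ R a b p).differentiableAt, ?_, ?_⟩
    · intro h
      simp at h
    · have hfd : fderiv ℝ (Fint σ R a b) = fun p =>
        (σ⁻¹ ^ 2 * Fint σ R (a + 1) b p - (a : ℝ) * Fint σ R (a - 1) b p) •
            ContinuousLinearMap.fst ℝ ℝ ℝ
          + (σ⁻¹ ^ 2 * Fint σ R a (b + 1) p - (b : ℝ) * Fint σ R a (b - 1) p) •
            ContinuousLinearMap.snd ℝ ℝ ℝ :=
        funext fun p => (hasFDerivAt_Fint hσ R a b p).fderiv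
      rw [hfd]
      exact (((contDiff_const.mul (ih (a + 1) b)).sub
          (contDiff_const.mul (ih (a - 1) b))).smul contDiff_const).add
        (((contDiff_const.mul (ih a (b + 1))).sub
          (contDiff_const.mul (ih a (b - 1)))).smul contDiff_const)

lemma contDiff_Fint {σ : ℝ} (hσ : 0 < σ) (R : Set (ℝ × ℝ)) (r : ℕ∞) (a b : ℕ) :
    ContDiff ℝ r (Fint σ R a b) := by
  have h : ContDiff ℝ (((⊤ : ℕ∞) : WithTop ℕ∞)) (Fint σ R a b) :=
    contDiff_infty.2 fun n => contDiff_Fint_nat hσ R n a b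
  exact h.of_le (by exact_mod_cast le_top)

end PersistAux

/-- Let `σ > 0`, `ω : ℝ → ℝ` of class `C^r` with `ω 0 = 0`, and
`R₁,…,R_s` measurable subsets of `ℝ²`. Then for every `m`, the map
`ℝ^{2m} → ℝ^s` sending `(b₁,d₁,…,b_m,d_m)` to the vector whose `t`-th component is
`∑ i, ω (dᵢ - bᵢ) ∫_{R_t} g_{bᵢ,dᵢ}(x,y) dx dy`, where
`g_{b,d}(x,y) = (1/(2πσ²)) exp(-((x-b)² + (y-(d-b))²)/(2σ²))`,
is of class `C^r` on all of `ℝ^{2m}`.  (These maps are the compositions of the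
persistence image with the quotient maps `Q_{m,0}`.) -/
theorem persistenceImage_comp_quotient_contDiff
    (r : ℕ∞) (σ : ℝ) (hσ : 0 < σ) (ω : ℝ → ℝ) (hω : ContDiff ℝ r ω) (hω0 : ω 0 = 0)
    (s : ℕ) (R : Fin s → Set (ℝ × ℝ)) (hR : ∀ t, MeasurableSet (R t)) (m : ℕ) :
    ContDiff ℝ r (fun x : Fin m → ℝ × ℝ => fun t : Fin s =>
      ∑ i : Fin m, ω ((x i).2 - (x i).1) *
        ∫ q in R t, (1 / (2 * Real.pi * σ ^ 2)) *
          Real.exp (-((q.1 - (x i).1) ^ 2 + (q.2 - ((x i).2 - (x i).1)) ^ 2) /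
            (2 * σ ^ 2))) := by
  have key : ∀ (t : Fin s) (b c : ℝ),
      (∫ q in R t, (1 / (2 * Real.pi * σ ^ 2)) *
        Real.exp (-((q.1 - b) ^ 2 + (q.2 - c) ^ 2) / (2 * σ ^ 2)))
      = (1 / (2 * Real.pi * σ ^ 2)) * PersistAux.Fint σ (R t) 0 0 (b, c) := by
    intro t b c
    rw [MeasureTheory.integral_const_mul]
    congr 1
    unfold PersistAux.Fint
    congr 1
    funext q
    simp only [PersistAux.psi, pow_zero, one_mul, ← Real.exp_add]
    congr 1
    ring
  have hfun : (fun x : Fin m → ℝ × ℝ => fun t : Fin s =>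
      ∑ i : Fin m, ω ((x i).2 - (x i).1) *
        ∫ q in R t, (1 / (2 * Real.pi * σ ^ 2)) *
          Real.exp (-((q.1 - (x i).1) ^ 2 + (q.2 - ((x i).2 - (x i).1)) ^ 2) /
            (2 * σ ^ 2)))
      = fun x : Fin m → ℝ × ℝ => fun t : Fin s =>
        ∑ i : Fin m, ω ((x i).2 - (x i).1) *
          ((1 / (2 * Real.pi * σ ^ 2)) *
            PersistAux.Fint σ (R t) 0 0 ((x i).1, (x i).2 - (x i).1)) := by
    funext x t
    exact Finset.sum_congr rfl fun i _ => by rw [key t ((x i).1) ((x i).2 - (x i).1)]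
  rw [hfun]
  apply contDiff_pi.2
  intro t
  apply ContDiff.sum
  intro i _
  have hxi : ContDiff ℝ r (fun x : Fin m → ℝ × ℝ => x i) :=
    (ContinuousLinearMap.proj (R := ℝ) (φ := fun _ : Fin m => ℝ × ℝ) i).contDiff
  have h1 : ContDiff ℝ r (fun x : Fin m → ℝ × ℝ => (x i).2 - (x i).1) :=
    (contDiff_snd.comp hxi).sub (contDiff_fst.comp hxi)
  exact (hω.comp h1).mul (contDiff_const.mul
    ((PersistAux.contDiff_Fint hσ (R t) r 0 0).comp (ContDiff.prodMk (contDiff_fst.comp hxi) h1)))
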